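/- For all t ≥ 0 and all x ∈ ℝ, the characteristic and the solution value along it satisfy |ξ(t,x) − x| ≤ t·|ū(x)| + (t²/8)·∫_ℝ ū_x(y)² dy and |ū(x) + ∫₀ᵗ φ(s,x) ds − ū(x)| = |∫₀ᵗ φ(s,x) ds| ≤ (t/4)·∫_ℝ ū_x(y)² dy; that is, |u(t, ξ(t,x)) − ū(x)| ≤ (t/4)·∥ū_x∥²_{L²}. -/

import Mathlib

open MeasureTheory

/-- `φ(t,y) = (1/4) ∫_{{ū_x > -2/t}} sign(y-x) ū_x(x)² dx` for `t ≠ 0`, and the full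
integral `φ(0,y) = (1/4) ∫_ℝ sign(y-x) ū_x(x)² dx` at `t = 0`. -/
noncomputable def phiHS (w : ℝ → ℝ) (t y : ℝ) : ℝ :=
  if t = 0 then (1 / 4) * ∫ x : ℝ, Real.sign (y - x) * (w x) ^ 2
  else (1 / 4) * ∫ x in {x : ℝ | w x > -2 / t}, Real.sign (y - x) * (w x) ^ 2

/-- The characteristic `ξ(t,y) = y + t ū(y) + ∫₀ᵗ (t-s) φ(s,y) ds`. -/
noncomputable def xiHS (u w : ℝ → ℝ) (t y : ℝ) : ℝ :=
  y + t * u y + ∫ s in (0 : ℝ)..t, (t - s) * phiHS w s y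

lemma abs_sign_le_one (a : ℝ) : |Real.sign a| ≤ 1 := by
  rcases Real.sign_apply_eq a with h | h | h <;> rw [h] <;> norm_num

lemma phi_abs_le (w : ℝ → ℝ) (hInt : Integrable (fun x => (w x) ^ 2) volume)
    (t y : ℝ) : |phiHS w t y| ≤ (1 / 4) * ∫ x : ℝ, (w x) ^ 2 := by
  have hC : (0 : ℝ) ≤ ∫ x : ℝ, (w x) ^ 2 := integral_nonneg fun x => sq_nonneg _
  have key : ∀ μ : Measure ℝ, μ ≤ volume →
      |∫ x : ℝ, Real.sign (y - x) * (w x) ^ 2 ∂μ| ≤ ∫ x : ℝ, (w x) ^ 2 := by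
    intro μ hμ
    have hIntμ : Integrable (fun x => (w x) ^ 2) μ := hInt.mono_measure hμ
    have h1 : |∫ x : ℝ, Real.sign (y - x) * (w x) ^ 2 ∂μ| ≤ ∫ x : ℝ, (w x) ^ 2 ∂μ := by
      rw [← Real.norm_eq_abs]
      refine norm_integral_le_of_norm_le hIntμ (Filter.Eventually.of_forall fun x => ?_)
      rw [Real.norm_eq_abs, abs_mul, abs_sq]
      calc |Real.sign (y - x)| * (w x) ^ 2 ≤ 1 * (w x) ^ 2 :=
            mul_le_mul_of_nonneg_right (abs_sign_le_one _) (sq_nonneg _)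
        _ = (w x) ^ 2 := one_mul _
    refine h1.trans ?_
    exact integral_mono_measure hμ (Filter.Eventually.of_forall fun x => sq_nonneg _) hInt
  unfold phiHS
  split_ifs
  · rw [abs_mul]
    have := key volume le_rfl
    calc |(1:ℝ)/4| * |∫ x : ℝ, Real.sign (y - x) * (w x) ^ 2|
        ≤ |(1:ℝ)/4| * ∫ x : ℝ, (w x) ^ 2 := by
          exact mul_le_mul_of_nonneg_left this (abs_nonneg _)
      _ = (1/4) * ∫ x : ℝ, (w x) ^ 2 := by norm_num
  · rw [abs_mul]
    have := key (volume.restrict {x : ℝ | w x > -2 / t}) Measure.restrict_le_self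
    calc |(1:ℝ)/4| * |∫ x in {x : ℝ | w x > -2 / t}, Real.sign (y - x) * (w x) ^ 2|
        ≤ |(1:ℝ)/4| * ∫ x : ℝ, (w x) ^ 2 := mul_le_mul_of_nonneg_left this (abs_nonneg _)
      _ = (1/4) * ∫ x : ℝ, (w x) ^ 2 := by norm_num

open intervalIntegral in
lemma integral_t_sub_aux (t : ℝ) : ∫ s in (0:ℝ)..t, (t - s) = t^2/2 := by
  rw [intervalIntegral.integral_sub intervalIntegrable_const
    ((by continuity : Continuous fun s : ℝ => s).intervalIntegrable _ _)]
  rw [integral_id, intervalIntegral.integral_const]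
  simp; ring

/-- A priori bounds on characteristics and on the solution along them:
`|ξ(t,x) - x| ≤ t|ū(x)| + (t²/8)‖ū_x‖²_{L²}` and
`|u(t,ξ(t,x)) - ū(x)| = |∫₀ᵗ φ(s,x) ds| ≤ (t/4)‖ū_x‖²_{L²}`. -/
theorem characteristic_displacement_bounds (ubar ubarx : ℝ → ℝ)
    (hAC : ∀ a b : ℝ, a ≤ b → ubar b - ubar a = ∫ x in a..b, ubarx x)
    (hL2 : MemLp ubarx 2 (volume : Measure ℝ)) :
    ∀ t : ℝ, 0 ≤ t → ∀ x : ℝ,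
      |xiHS ubar ubarx t x - x| ≤
        t * |ubar x| + (t ^ 2 / 8) * (∫ y : ℝ, (ubarx y) ^ 2) ∧
      |∫ s in (0 : ℝ)..t, phiHS ubarx s x| ≤ (t / 4) * ∫ y : ℝ, (ubarx y) ^ 2 := by
  intro t ht x
  have hInt : Integrable (fun y => (ubarx y) ^ 2) volume := hL2.integrable_sq
  set C : ℝ := ∫ y : ℝ, (ubarx y) ^ 2 with hCdef
  have hC : (0 : ℝ) ≤ C := integral_nonneg fun y => sq_nonneg _
  have hphi : ∀ s : ℝ, |phiHS ubarx s x| ≤ (1 / 4) * C := fun s => phi_abs_le ubarx hInt s x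
  constructor
  · -- first bound
    have hsub : xiHS ubar ubarx t x - x = t * ubar x + ∫ s in (0:ℝ)..t, (t - s) * phiHS ubarx s x := by
      unfold xiHS; ring
    rw [hsub]
    refine (abs_add_le _ _).trans ?_
    rw [abs_mul, abs_of_nonneg ht]
    gcongr
    -- |∫ (t-s) φ| ≤ t²/8 * C
    have hbound : ‖∫ s in (0:ℝ)..t, (t - s) * phiHS ubarx s x‖ ≤
        |∫ s in (0:ℝ)..t, (t - s) * ((1/4) * C)| := by
      refine intervalIntegral.norm_integral_le_abs_of_norm_le ?_ ?_
      · refine (ae_restrict_mem measurableSet_uIoc).mono fun s hs => ?_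
        rw [Set.uIoc_of_le ht] at hs
        rw [Real.norm_eq_abs, abs_mul]
        have h1 : |t - s| = t - s := abs_of_nonneg (by linarith [hs.2])
        rw [h1]
        exact mul_le_mul_of_nonneg_left (hphi s) (by linarith [hs.2])
      · exact (Continuous.intervalIntegrable (by continuity) _ _)
    rw [Real.norm_eq_abs] at hbound
    refine hbound.trans ?_
    have hcalc : ∫ s in (0:ℝ)..t, (t - s) * ((1/4) * C) = (t^2/2) * ((1/4) * C) := by
      rw [intervalIntegral.integral_mul_const]
      rw [integral_t_sub_aux]
    rw [hcalc, abs_of_nonneg (by positivity)]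
    ring_nf
    rfl
  · -- second bound
    have hbound : ‖∫ s in (0:ℝ)..t, phiHS ubarx s x‖ ≤
        |∫ s in (0:ℝ)..t, (1/4) * C| := by
      refine intervalIntegral.norm_integral_le_abs_of_norm_le ?_ intervalIntegrable_const
      exact Filter.Eventually.of_forall fun s => hphi s
    rw [Real.norm_eq_abs] at hbound
    refine hbound.trans ?_
    rw [intervalIntegral.integral_const, smul_eq_mul, sub_zero,
      abs_of_nonneg (by positivity)]
    ring_nf
    rfl
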